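/- Let 𝔄 be an abelian category. For any two objects E^{•,•}, F^{•,•} of 𝔄^Π, there is a natural isomorphism Hom_{S⁻¹𝔄^Π}(E^{•,•}, F^{•,•}) ≅ colim_{φ ∈ M} Hom_{𝔄^Π}(φ̃E^{•,•}, F^{•,•}), where the colimit is over the directed set M ordered by φ ≤ φ' iff φ ≥ φ' pointwise (transition maps induced by the canonical morphisms φ̃'E → φ̃E). -/

import Mathlib

open CategoryTheory CategoryTheory.Limits

universe v u

/-- `Π = {(a,b) ∈ ℤ² : a ≤ b}` with the reverse componentwise order. -/
structure PiSet : Type where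
  a : ℤ
  b : ℤ
  le_ab : a ≤ b

instance : PartialOrder PiSet where
  le x y := y.a ≤ x.a ∧ y.b ≤ x.b
  le_refl x := ⟨le_refl _, le_refl _⟩
  le_trans x y z h h' := ⟨h'.1.trans h.1, h'.2.trans h.2⟩
  le_antisymm x y h h' := by
    cases x; cases y
    simp only [PiSet.mk.injEq]
    exact ⟨le_antisymm h'.1 h.1, le_antisymm h'.2 h.2⟩

variable {𝔄 : Type u} [Category.{v} 𝔄] [Abelian 𝔄]

/-- An object `E` of `𝔄^Π` is *admissible* if for all `a ≤ b ≤ c` the sequence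
`0 → E^{b,c} → E^{a,c} → E^{a,b} → 0` (given by the transition maps) is short exact. -/
def Admissible (E : PiSet ⥤ 𝔄) : Prop :=
  ∀ (a b c : ℤ) (hab : a ≤ b) (hbc : b ≤ c),
    ∃ w : E.map (homOfLE (show (⟨b, c, hbc⟩ : PiSet) ≤ ⟨a, c, hab.trans hbc⟩ from
            ⟨hab, le_refl c⟩)) ≫
          E.map (homOfLE (show (⟨a, c, hab.trans hbc⟩ : PiSet) ≤ ⟨a, b, hab⟩ from
            ⟨le_refl a, hbc⟩)) = 0,
      (ShortComplex.mk _ _ w).ShortExact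

/-- `M`: order-preserving maps `ℤ → ℤ` tending to `±∞` at `±∞`. -/
def inM (φ : ℤ → ℤ) : Prop :=
  Monotone φ ∧ Filter.Tendsto φ Filter.atTop Filter.atTop ∧
    Filter.Tendsto φ Filter.atBot Filter.atBot

/-- The diagram `φ̃(E)` with `φ̃(E)^{a,b} = E^{φ(a),φ(b)}`. -/
def tilde (φ : ℤ → ℤ) (hφ : Monotone φ) (E : PiSet ⥤ 𝔄) : PiSet ⥤ 𝔄 where
  obj p := E.obj ⟨φ p.a, φ p.b, hφ p.le_ab⟩
  map {p q} h := E.map (homOfLE ⟨hφ (leOfHom h).1, hφ (leOfHom h).2⟩)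
  map_id p := by
    rw [← E.map_id]
    exact congrArg E.map (Subsingleton.elim _ _)
  map_comp f g := by
    rw [← E.map_comp]
    exact congrArg E.map (Subsingleton.elim _ _)

/-- The canonical morphism `φ̃(E) → ψ̃(E)` for `φ ≥ ψ` pointwise, given by transition maps. -/
def canMap (φ ψ : ℤ → ℤ) (hφ : Monotone φ) (hψ : Monotone ψ) (h : ∀ i, ψ i ≤ φ i)
    (E : PiSet ⥤ 𝔄) : tilde φ hφ E ⟶ tilde ψ hψ E where
  app p := E.map (homOfLE ⟨h _, h _⟩)
  naturality p q f := by
    dsimp [tilde]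
    rw [← E.map_comp, ← E.map_comp]
    exact congrArg E.map (Subsingleton.elim _ _)

/-- The class `S` of canonical morphisms `φ̃(E) → ψ̃(E)` for `φ ≥ ψ` in `M`. -/
def Scl : MorphismProperty (PiSet ⥤ 𝔄) := fun X Y f =>
  ∃ (E : PiSet ⥤ 𝔄) (φ ψ : ℤ → ℤ) (hφ : inM φ) (hψ : inM ψ) (h : ∀ i, ψ i ≤ φ i)
    (hX : X = tilde φ hφ.1 E) (hY : Y = tilde ψ hψ.1 E),
    f = eqToHom hX ≫ canMap φ ψ hφ.1 hψ.1 h E ≫ eqToHom hY.symm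

/-- `N(𝔄)`: the objects of `𝔄^Π` which become zero in the localization `S⁻¹𝔄^Π`. -/
def Nsub (E : PiSet ⥤ 𝔄) : Prop :=
  CategoryTheory.Limits.IsZero ((Scl (𝔄 := 𝔄)).Q.obj E)

lemma inM_id : inM (id : ℤ → ℤ) :=
  ⟨monotone_id, Filter.tendsto_id, Filter.tendsto_id⟩

lemma inM_max_id (φ : ℤ → ℤ) (hφ : inM φ) : inM (fun i => max (φ i) i) :=
  ⟨hφ.1.max monotone_id,
    Filter.tendsto_atTop_mono (fun i => le_max_right _ _) Filter.tendsto_id,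
    Filter.tendsto_atBot.2 (fun b => by
      filter_upwards [hφ.2.2.eventually_le_atBot b, Filter.eventually_le_atBot b] with i h1 h2
      exact max_le h1 h2)⟩

lemma scl_canMap (φ ψ : ℤ → ℤ) (hφ : inM φ) (hψ : inM ψ) (h : ∀ i, ψ i ≤ φ i)
    (E : PiSet ⥤ 𝔄) : Scl (canMap φ ψ hφ.1 hψ.1 h E) :=
  ⟨E, φ, ψ, hφ, hψ, h, rfl, rfl, by simp⟩

/-- The canonical isomorphism `E ≅ ĩd(E)`. -/
def idIso (E : PiSet ⥤ 𝔄) : E ≅ tilde id monotone_id E where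
  hom :=
    { app := fun p => 𝟙 (E.obj p)
      naturality := by
        intro p q f
        dsimp [tilde]
        simp only [Category.comp_id, Category.id_comp]
        exact congrArg E.map (Subsingleton.elim _ _) }
  inv :=
    { app := fun p => 𝟙 (E.obj p)
      naturality := by
        intro p q f
        dsimp [tilde]
        simp only [Category.comp_id, Category.id_comp]
        exact congrArg E.map (Subsingleton.elim _ _) }
  hom_inv_id := by ext p; first | exact Category.comp_id _ | simp [tilde]
  inv_hom_id := by ext p; first | exact Category.comp_id _ | simp [tilde]

/-- The canonical map `Hom_{𝔄^Π}(φ̃E, F) → Hom_{S⁻¹𝔄^Π}(E, F)`: compose in the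
localization with the formal inverse of the canonical morphism `χ̃E → ĩdE ≅ E`
(`χ = max (φ, id)`) followed by the canonical morphism `χ̃E → φ̃E`. -/
noncomputable def theta (E F : PiSet ⥤ 𝔄) (φ : ℤ → ℤ) (hφ : inM φ)
    (u : tilde φ hφ.1 E ⟶ F) :
    (Scl (𝔄 := 𝔄)).Q.obj E ⟶ (Scl (𝔄 := 𝔄)).Q.obj F :=
  ((Scl (𝔄 := 𝔄)).Q.mapIso (idIso E)).hom ≫
    (Localization.Construction.wIso
      (canMap (fun i => max (φ i) i) id (inM_max_id φ hφ).1 monotone_id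
        (fun i => le_max_right _ _) E)
      (scl_canMap _ _ (inM_max_id φ hφ) inM_id _ E)).inv ≫
    (Scl (𝔄 := 𝔄)).Q.map
      (canMap (fun i => max (φ i) i) φ (inM_max_id φ hφ).1 hφ.1 (fun i => le_max_left _ _) E) ≫
    (Scl (𝔄 := 𝔄)).Q.map u

set_option linter.unusedSectionVars false
set_option linter.unusedVariables false
set_option maxHeartbeats 1000000

section Aux

variable {𝔄 : Type u} [Category.{v} 𝔄] [Abelian 𝔄]

lemma inM_comp {φ ψ : ℤ → ℤ} (hφ : inM φ) (hψ : inM ψ) : inM (ψ ∘ φ) :=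
  ⟨hψ.1.comp hφ.1, hψ.2.1.comp hφ.2.1, hψ.2.2.comp hφ.2.2⟩

lemma inM_max {φ ψ : ℤ → ℤ} (hφ : inM φ) (hψ : inM ψ) : inM (fun i => max (φ i) (ψ i)) :=
  ⟨hφ.1.max hψ.1,
    Filter.tendsto_atTop_mono (fun i => le_max_left _ _) hφ.2.1,
    Filter.tendsto_atBot.2 (fun b => by
      filter_upwards [hφ.2.2.eventually_le_atBot b, hψ.2.2.eventually_le_atBot b] with i h1 h2
      exact max_le h1 h2)⟩

lemma canMap_comp (φ ψ χ : ℤ → ℤ) (hφ : Monotone φ) (hψ : Monotone ψ) (hχ : Monotone χ)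
    (h1 : ∀ i, ψ i ≤ φ i) (h2 : ∀ i, χ i ≤ ψ i) (E : PiSet ⥤ 𝔄) :
    canMap φ ψ hφ hψ h1 E ≫ canMap ψ χ hψ hχ h2 E =
      canMap φ χ hφ hχ (fun i => (h2 i).trans (h1 i)) E := by
  apply NatTrans.ext; funext p
  show E.map _ ≫ E.map _ = E.map _
  rw [← E.map_comp]
  exact congrArg E.map (Subsingleton.elim _ _)

lemma canMap_self (φ : ℤ → ℤ) (hφ : Monotone φ) (h : ∀ i, φ i ≤ φ i) (E : PiSet ⥤ 𝔄) :
    canMap φ φ hφ hφ h E = 𝟙 _ := by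
  apply NatTrans.ext; funext p
  show E.map _ = 𝟙 _
  rw [show (homOfLE _ : (⟨φ p.a, φ p.b, hφ p.le_ab⟩ : PiSet) ⟶ ⟨φ p.a, φ p.b, hφ p.le_ab⟩)
    = 𝟙 _ from Subsingleton.elim _ _, E.map_id]

lemma canMap_whisker (χ : ℤ → ℤ) (hχ : Monotone χ) (h : ∀ i, i ≤ χ i)
    (ψ : ℤ → ℤ) (hψ : Monotone ψ) (E : PiSet ⥤ 𝔄) :
    canMap χ id hχ monotone_id h (tilde ψ hψ E) =
      canMap (ψ ∘ χ) ψ (hψ.comp hχ) hψ (fun i => hψ (h i)) E := by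
  apply NatTrans.ext; funext p
  exact congrArg E.map (Subsingleton.elim _ _)

/-- functoriality of `tilde` on morphisms -/
def tildeMap (χ : ℤ → ℤ) (hχ : Monotone χ) {X Y : PiSet ⥤ 𝔄} (f : X ⟶ Y) :
    tilde χ hχ X ⟶ tilde χ hχ Y where
  app p := f.app ⟨χ p.a, χ p.b, hχ p.le_ab⟩
  naturality p q g :=
    f.naturality (homOfLE ⟨hχ (leOfHom g).1, hχ (leOfHom g).2⟩)

lemma tildeMap_comp (χ : ℤ → ℤ) (hχ : Monotone χ) {X Y Z : PiSet ⥤ 𝔄} (f : X ⟶ Y) (g : Y ⟶ Z) :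
    tildeMap χ hχ (f ≫ g) = tildeMap χ hχ f ≫ tildeMap χ hχ g := by
  apply NatTrans.ext; funext p; rfl

lemma tildeMap_canMap_id (χ : ℤ → ℤ) (hχ : Monotone χ) (h : ∀ i, i ≤ χ i) (Y : PiSet ⥤ 𝔄) :
    tildeMap χ hχ (canMap χ id hχ monotone_id h Y) =
      canMap χ id hχ monotone_id h (tilde χ hχ Y) := by
  apply NatTrans.ext; funext p
  exact congrArg Y.map (Subsingleton.elim _ _)

lemma canMap_id_natural (χ : ℤ → ℤ) (hχ : Monotone χ) (h : ∀ i, i ≤ χ i)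
    {X Y : PiSet ⥤ 𝔄} (f : X ⟶ Y) :
    canMap χ id hχ monotone_id h X ≫ f =
      tildeMap χ hχ f ≫ canMap χ id hχ monotone_id h Y := by
  apply NatTrans.ext; funext p
  exact f.naturality (homOfLE ⟨h _, h _⟩)

end Aux
section Aux2
variable {𝔄 : Type u} [Category.{v} 𝔄] [Abelian 𝔄]

/-- The subclass of `S` consisting of the canonical maps `χ̃(Y) → Y` for `χ ≥ id` in `M`. -/
def Wcl : MorphismProperty (PiSet ⥤ 𝔄) := fun X Y f =>
  ∃ (χ : ℤ → ℤ) (hχ : inM χ) (h : ∀ i, i ≤ χ i) (hX : X = tilde χ hχ.1 Y),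
    f = eqToHom hX ≫ canMap χ id hχ.1 monotone_id h Y

lemma wcl_le_scl {X Y : PiSet ⥤ 𝔄} {f : X ⟶ Y} (hf : Wcl f) : Scl f := by
  obtain ⟨χ, hχ, h, hX, hf⟩ := hf
  exact ⟨Y, χ, id, hχ, inM_id, h, hX, rfl, by rw [hf]; erw [eqToHom_refl, Category.comp_id]; rfl⟩

instance : (Wcl (𝔄 := 𝔄)).IsMultiplicative where
  id_mem X := ⟨id, inM_id, fun i => le_refl i, rfl, by
    erw [eqToHom_refl, Category.id_comp, canMap_self]; rfl⟩
  comp_mem := by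
    rintro X Y Z f g ⟨χ, hχ, h, hX, hf⟩ ⟨δ, hδ, h', hY, hg⟩
    subst hY; subst hX; subst hf; subst hg
    refine ⟨δ ∘ χ, inM_comp hχ hδ, fun i => (h' i).trans (hδ.1 (h i)), rfl, ?_⟩
    simp only [eqToHom_refl, Category.id_comp]
    erw [canMap_whisker χ hχ.1 h δ hδ.1 Z, canMap_comp, eqToHom_refl, Category.id_comp]

instance : (Wcl (𝔄 := 𝔄)).HasRightCalculusOfFractions where
  exists_rightFraction X Y φf := by
    obtain ⟨f, s, hs⟩ := φf
    obtain ⟨χ, hχ, h, hY, hseq⟩ := hs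
    subst hY; subst hseq
    refine ⟨MorphismProperty.RightFraction.mk
      (canMap χ id hχ.1 monotone_id h X) ⟨χ, hχ, h, rfl, by simp; rfl⟩
      (tildeMap χ hχ.1 f), ?_⟩
    dsimp
    simp only [eqToHom_refl, Category.id_comp]
    exact canMap_id_natural χ hχ.1 h f
  ext := by
    intro X Y Y' f₁ f₂ s hs hfs
    obtain ⟨χ, hχ, h, hY, hseq⟩ := hs
    subst hY; subst hseq
    simp only [eqToHom_refl, Category.id_comp] at hfs
    refine ⟨tilde χ hχ.1 X, canMap χ id hχ.1 monotone_id h X, ⟨χ, hχ, h, rfl, by simp; rfl⟩, ?_⟩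
    erw [canMap_id_natural χ hχ.1 h f₁, canMap_id_natural χ hχ.1 h f₂,
      ← tildeMap_canMap_id χ hχ.1 h Y', ← tildeMap_comp, ← tildeMap_comp, hfs]; rfl

lemma exists_dominating (φ ψ : ℤ → ℤ) (hφ : inM φ) (hψ : inM ψ) :
    ∃ ρ : ℤ → ℤ, inM ρ ∧ (∀ i, i ≤ ρ i) ∧ ∀ i, φ i ≤ ψ (ρ i) := by
  have exi : ∀ i : ℤ, ∃ lb : ℤ, (i ≤ lb ∧ φ i ≤ ψ lb) ∧
      ∀ z : ℤ, (i ≤ z ∧ φ i ≤ ψ z) → lb ≤ z := by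
    intro i
    apply Int.exists_least_of_bdd
    · exact ⟨i, fun z hz => hz.1⟩
    · obtain ⟨n, hn⟩ := (hψ.2.1.eventually_ge_atTop (φ i)).exists
      exact ⟨max i n, le_max_left _ _, le_trans hn (hψ.1 (le_max_right _ _))⟩
  choose ρ hρ hmin using exi
  refine ⟨ρ, ⟨?_, ?_, ?_⟩, fun i => (hρ i).1, fun i => (hρ i).2⟩
  · intro i j hij
    exact hmin i (ρ j) ⟨hij.trans (hρ j).1, (hφ.1 hij).trans (hρ j).2⟩
  · exact Filter.tendsto_atTop_mono (fun i => (hρ i).1) Filter.tendsto_id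
  · rw [Filter.tendsto_atBot]
    intro b
    filter_upwards [hφ.2.2.eventually_le_atBot (ψ b), Filter.eventually_le_atBot b] with i h1 h2
    exact hmin i b ⟨h2, h1⟩

lemma scl_isInvertedBy {D : Type*} [Category D] (G : (PiSet ⥤ 𝔄) ⥤ D)
    (hG : (Wcl (𝔄 := 𝔄)).IsInvertedBy G) : (Scl (𝔄 := 𝔄)).IsInvertedBy G := by
  rintro X Y f ⟨E, φ, ψ, hφ, hψ, hle, hX, hY, hf⟩
  subst hX; subst hY; subst hf
  simp only [eqToHom_refl, Category.comp_id, Category.id_comp]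
  obtain ⟨ρ, hρ, hρid, hρdom⟩ := exists_dominating φ ψ hφ hψ
  obtain ⟨σ, hσ, hσid, hσdom⟩ := exists_dominating (ψ ∘ ρ) φ (inM_comp hρ hψ) hφ
  set s := canMap φ ψ hφ.1 hψ.1 hle E with hs
  set r := canMap (ψ ∘ ρ) φ (inM_comp hρ hψ).1 hφ.1 hρdom E with hr
  set t := canMap (φ ∘ σ) (ψ ∘ ρ) (inM_comp hσ hφ).1 (inM_comp hρ hψ).1 hσdom E with ht
  have h1 : IsIso (G.map r ≫ G.map s) := by
    rw [← G.map_comp, hr, hs, canMap_comp]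
    refine hG _ ⟨ρ, hρ, hρid, rfl, ?_⟩
    erw [eqToHom_refl, Category.id_comp]
    erw [canMap_whisker]
  have h2 : IsIso (G.map t ≫ G.map r) := by
    rw [← G.map_comp, ht, hr, canMap_comp]
    refine hG _ ⟨σ, hσ, hσid, rfl, ?_⟩
    erw [eqToHom_refl, Category.id_comp]
    erw [canMap_whisker]
  have hepi : Epi (G.map r) := by
    haveI := h2
    exact epi_of_epi (G.map t) (G.map r)
  have hriso : IsIso (G.map r) := by
    haveI := h1
    refine ⟨G.map s ≫ inv (G.map r ≫ G.map s), ?_, ?_⟩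
    · rw [← Category.assoc, IsIso.hom_inv_id]
    · rw [← cancel_epi (G.map r)]
      calc G.map r ≫ (G.map s ≫ inv (G.map r ≫ G.map s)) ≫ G.map r
          = ((G.map r ≫ G.map s) ≫ inv (G.map r ≫ G.map s)) ≫ G.map r := by
            simp only [Category.assoc]
        _ = 𝟙 _ ≫ G.map r := by rw [IsIso.hom_inv_id]
        _ = G.map r ≫ 𝟙 _ := by simp
  haveI := hriso
  haveI := h1
  exact IsIso.of_isIso_comp_left (G.map r) (G.map s)

end Aux2
section Aux3
variable {𝔄 : Type u} [Category.{v} 𝔄] [Abelian 𝔄]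

/-- The strict universal property: `S⁻¹𝔄^Π` is also the localization at `Wcl`. -/
noncomputable def wclStrictUniv (D' : Type*) [Category D'] :
    Localization.StrictUniversalPropertyFixedTarget (Scl (𝔄 := 𝔄)).Q (Wcl (𝔄 := 𝔄)) D' where
  inverts := fun X Y f hf => (Scl (𝔄 := 𝔄)).Q_inverts f (wcl_le_scl hf)
  lift F hF := Localization.Construction.lift F (scl_isInvertedBy F hF)
  fac F hF := Localization.Construction.fac F _
  uniq := Localization.Construction.uniq

instance : (Scl (𝔄 := 𝔄)).Q.IsLocalization (Wcl (𝔄 := 𝔄)) :=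
  Functor.IsLocalization.mk' _ _ (wclStrictUniv _) (wclStrictUniv _)

/-- The formal inverse of `Q.map (canMap χ id)`. -/
noncomputable def qinv (χ : ℤ → ℤ) (hχ : inM χ) (h : ∀ i, i ≤ χ i) (E : PiSet ⥤ 𝔄) :
    (Scl (𝔄 := 𝔄)).Q.obj E ⟶ (Scl (𝔄 := 𝔄)).Q.obj (tilde χ hχ.1 E) :=
  (Localization.Construction.wIso (canMap χ id hχ.1 monotone_id h E)
    (scl_canMap χ id hχ inM_id h E)).inv

lemma qinv_comp_map (χ : ℤ → ℤ) (hχ : inM χ) (h : ∀ i, i ≤ χ i) (E : PiSet ⥤ 𝔄) :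
    qinv χ hχ h E ≫ (Scl (𝔄 := 𝔄)).Q.map (canMap χ id hχ.1 monotone_id h E) = 𝟙 _ :=
  (Localization.Construction.wIso (canMap χ id hχ.1 monotone_id h E)
    (scl_canMap χ id hχ inM_id h E)).inv_hom_id

lemma map_comp_qinv (χ : ℤ → ℤ) (hχ : inM χ) (h : ∀ i, i ≤ χ i) (E : PiSet ⥤ 𝔄) :
    (Scl (𝔄 := 𝔄)).Q.map (canMap χ id hχ.1 monotone_id h E) ≫ qinv χ hχ h E = 𝟙 _ :=
  (Localization.Construction.wIso (canMap χ id hχ.1 monotone_id h E)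
    (scl_canMap χ id hχ inM_id h E)).hom_inv_id

lemma eq_qinv (χ : ℤ → ℤ) (hχ : inM χ) (h : ∀ i, i ≤ χ i) (E : PiSet ⥤ 𝔄)
    (A : (Scl (𝔄 := 𝔄)).Q.obj E ⟶ (Scl (𝔄 := 𝔄)).Q.obj (tilde χ hχ.1 E))
    (hA : A ≫ (Scl (𝔄 := 𝔄)).Q.map (canMap χ id hχ.1 monotone_id h E) = 𝟙 _) :
    A = qinv χ hχ h E := by
  calc A = A ≫ ((Scl (𝔄 := 𝔄)).Q.map (canMap χ id hχ.1 monotone_id h E) ≫ qinv χ hχ h E) := by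
        rw [map_comp_qinv]; exact (Category.comp_id A).symm
    _ = (A ≫ (Scl (𝔄 := 𝔄)).Q.map (canMap χ id hχ.1 monotone_id h E)) ≫ qinv χ hχ h E := by
        erw [Category.assoc]
    _ = qinv χ hχ h E := by erw [hA, Category.id_comp]

lemma qinv_trans (χ χ' : ℤ → ℤ) (hχ : inM χ) (hχ' : inM χ') (h : ∀ i, i ≤ χ i)
    (h' : ∀ i, i ≤ χ' i) (hle : ∀ i, χ i ≤ χ' i) (E : PiSet ⥤ 𝔄) :
    qinv χ hχ h E =
      qinv χ' hχ' h' E ≫ (Scl (𝔄 := 𝔄)).Q.map (canMap χ' χ hχ'.1 hχ.1 hle E) := by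
  refine (eq_qinv χ hχ h E _ ?_).symm
  rw [Category.assoc, ← Functor.map_comp, canMap_comp]
  exact qinv_comp_map χ' hχ' h' E

lemma theta_eq (E F : PiSet ⥤ 𝔄) (φ : ℤ → ℤ) (hφ : inM φ) (u : tilde φ hφ.1 E ⟶ F) :
    theta E F φ hφ u =
      qinv (fun i => max (φ i) i) (inM_max_id φ hφ) (fun i => le_max_right _ _) E ≫
        (Scl (𝔄 := 𝔄)).Q.map
          (canMap (fun i => max (φ i) i) φ (inM_max_id φ hφ).1 hφ.1
            (fun i => le_max_left _ _) E) ≫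
        (Scl (𝔄 := 𝔄)).Q.map u := by
  have h0 : ((Scl (𝔄 := 𝔄)).Q.mapIso (idIso E)).hom = 𝟙 ((Scl (𝔄 := 𝔄)).Q.obj E) := by
    erw [Functor.mapIso_hom, show (idIso E).hom = 𝟙 E from NatTrans.ext (funext fun p => rfl),
      CategoryTheory.Functor.map_id]
  unfold theta
  erw [h0, Category.id_comp]

lemma theta_eq_qinv (E F : PiSet ⥤ 𝔄) (φ : ℤ → ℤ) (hφ : inM φ) (χ : ℤ → ℤ) (hχ : inM χ)
    (hid : ∀ i, i ≤ χ i) (hle : ∀ i, φ i ≤ χ i) (u : tilde φ hφ.1 E ⟶ F) :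
    theta E F φ hφ u =
      qinv χ hχ hid E ≫
        (Scl (𝔄 := 𝔄)).Q.map (canMap χ φ hχ.1 hφ.1 hle E ≫ u) := by
  rw [theta_eq, qinv_trans (fun i => max (φ i) i) χ (inM_max_id φ hφ) hχ
    (fun i => le_max_right _ _) hid (fun i => max_le (hle i) (hid i)) E]
  simp only [Category.assoc, ← Functor.map_comp]
  rw [show canMap χ (fun i => max (φ i) i) hχ.1 (inM_max_id φ hφ).1
      (fun i => max_le (hle i) (hid i)) E ≫
      canMap (fun i => max (φ i) i) φ (inM_max_id φ hφ).1 hφ.1 (fun i => le_max_left _ _) E ≫ u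
      = canMap χ φ hχ.1 hφ.1 hle E ≫ u from by rw [← Category.assoc, canMap_comp]]

end Aux3
/-- `Hom_{S⁻¹𝔄^Π}(E,F) ≅ colim_{φ ∈ M} Hom_{𝔄^Π}(φ̃E, F)`: the canonical maps
`theta` form a cocone on the directed family `φ ↦ Hom(φ̃E, F)`, are jointly
surjective, and two elements are identified exactly when they agree after a
common refinement. -/
theorem hom_localization_eq_colimit (E F : PiSet ⥤ 𝔄) :
    (∀ (φ ψ : ℤ → ℤ) (hφ : inM φ) (hψ : inM ψ) (h : ∀ i, ψ i ≤ φ i)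
        (u : tilde ψ hψ.1 E ⟶ F),
        theta E F φ hφ (canMap φ ψ hφ.1 hψ.1 h E ≫ u) = theta E F ψ hψ u) ∧
    (∀ g : (Scl (𝔄 := 𝔄)).Q.obj E ⟶ (Scl (𝔄 := 𝔄)).Q.obj F,
        ∃ (φ : ℤ → ℤ) (hφ : inM φ) (u : tilde φ hφ.1 E ⟶ F), theta E F φ hφ u = g) ∧
    (∀ (φ ψ : ℤ → ℤ) (hφ : inM φ) (hψ : inM ψ) (u : tilde φ hφ.1 E ⟶ F)
        (v : tilde ψ hψ.1 E ⟶ F), theta E F φ hφ u = theta E F ψ hψ v →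
        ∃ (χ : ℤ → ℤ) (hχ : inM χ) (h1 : ∀ i, φ i ≤ χ i) (h2 : ∀ i, ψ i ≤ χ i),
          canMap χ φ hχ.1 hφ.1 h1 E ≫ u = canMap χ ψ hχ.1 hψ.1 h2 E ≫ v) := by
  classical
  refine ⟨?_, ?_, ?_⟩
  · -- cocone compatibility
    intro φ ψ hφ hψ h u
    have hid : ∀ i, i ≤ max (φ i) i := fun i => le_max_right _ _
    have hχφ : ∀ i, φ i ≤ max (φ i) i := fun i => le_max_left _ _
    have hχψ : ∀ i, ψ i ≤ max (φ i) i := fun i => (h i).trans (le_max_left _ _)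
    rw [theta_eq_qinv E F φ hφ (fun i => max (φ i) i) (inM_max_id φ hφ) hid hχφ,
      theta_eq_qinv E F ψ hψ (fun i => max (φ i) i) (inM_max_id φ hφ) hid hχψ]
    congr 1
    rw [← Category.assoc, canMap_comp]
  · -- surjectivity
    intro g
    obtain ⟨fr, hfr⟩ := Localization.exists_rightFraction (Scl (𝔄 := 𝔄)).Q (Wcl (𝔄 := 𝔄)) g
    obtain ⟨X', s, hs, f, hfr'⟩ := fr.cases
    subst hfr'
    haveI : IsIso ((Scl (𝔄 := 𝔄)).Q.map s) := (Scl (𝔄 := 𝔄)).Q_inverts s (wcl_le_scl hs)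
    have h1 := MorphismProperty.RightFraction.map_s_comp_map
      (MorphismProperty.RightFraction.mk s hs f) (Scl (𝔄 := 𝔄)).Q
      (Localization.inverts _ _)
    dsimp at h1
    have hs' := hs
    obtain ⟨χ, hχ, hid, hX, hseq⟩ := hs'
    subst hX
    refine ⟨χ, hχ, f, ?_⟩
    rw [hfr, theta_eq_qinv E F χ hχ χ hχ hid (fun i => le_refl _) f,
      canMap_self, Category.id_comp, ← cancel_epi ((Scl (𝔄 := 𝔄)).Q.map s), h1]
    rw [hseq]
    simp only [eqToHom_refl, Category.id_comp, ← Category.assoc]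
    erw [map_comp_qinv χ hχ hid E, Category.id_comp]
  · -- separation
    intro φ ψ hφ hψ u v heq
    set γ := fun i => max (max (φ i) i) (ψ i) with hγdef
    have hγ : inM γ := inM_max (inM_max_id φ hφ) hψ
    have hγid : ∀ i, i ≤ γ i := fun i => (le_max_right (φ i) i).trans (le_max_left _ _)
    have hγφ : ∀ i, φ i ≤ γ i := fun i => (le_max_left (φ i) i).trans (le_max_left _ _)
    have hγψ : ∀ i, ψ i ≤ γ i := fun i => le_max_right _ _
    rw [theta_eq_qinv E F φ hφ γ hγ hγid hγφ u, theta_eq_qinv E F ψ hψ γ hγ hγid hγψ v] at heq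
    haveI : IsIso (qinv γ hγ hγid E) := by unfold qinv; exact Iso.isIso_inv _
    have heq' := (cancel_epi (qinv γ hγ hγid E)).1 heq
    obtain ⟨X, s, hs, hcomm⟩ :=
      (MorphismProperty.map_eq_iff_precomp (Scl (𝔄 := 𝔄)).Q (Wcl (𝔄 := 𝔄)) _ _).1 heq'
    obtain ⟨δ, hδ, hidδ, hX, hseq⟩ := hs
    subst hX; subst hseq
    simp only [eqToHom_refl, Category.id_comp] at hcomm
    rw [canMap_whisker δ hδ.1 hidδ γ hγ.1 E] at hcomm
    refine ⟨γ ∘ δ, inM_comp hδ hγ, fun i => (hγφ i).trans (hγ.1 (hidδ i)),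
      fun i => (hγψ i).trans (hγ.1 (hidδ i)), ?_⟩
    erw [← Category.assoc, ← Category.assoc] at hcomm
    erw [canMap_comp, canMap_comp] at hcomm
    exact hcomm
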